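/- For the electric-vehicle vector fields F₀ and F₁ one has, for every x ∈ ℝ³: F₀₁(x) = −c₇(c₁, 0, c₅), F₀₀₁(x) = c₇(c₁² + c₂c₅, c₃c₅, c₅(c₁ + 2c₆x₃)), F₁₀₁(x) = 0, F₁₀₀₁(x) = 0, and F₁₀₀₀₁(x) = (0, 0, 2c₅²c₆c₇²). -/

import Mathlib

noncomputable section

/-- Lie bracket of vector fields on ℝ³: `[F,G](x) = G'(x)F(x) − F'(x)G(x)`. -/
def lieBracket (F G : (Fin 3 → ℝ) → (Fin 3 → ℝ)) (x : Fin 3 → ℝ) : Fin 3 → ℝ :=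
  fderiv ℝ G x (F x) - fderiv ℝ F x (G x)

/-- Drift vector field of the electric vehicle. -/
def F0 (c1 c2 c3 c4 c5 c6 : ℝ) (x : Fin 3 → ℝ) : Fin 3 → ℝ :=
  ![c1 * x 0 + c2 * x 2, c3 * x 2, c4 + c5 * x 0 + c6 * (x 2) ^ 2]

/-- Control vector field of the electric vehicle. -/
def F1 (c7 : ℝ) (_x : Fin 3 → ℝ) : Fin 3 → ℝ := ![c7, 0, 0]

open ContinuousLinearMap

/-- Projection onto the `i`-th coordinate as a continuous linear map. -/
abbrev pj (i : Fin 3) : (Fin 3 → ℝ) →L[ℝ] ℝ := ContinuousLinearMap.proj i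

lemma clm_eq {f g : (Fin 3 → ℝ) →L[ℝ] ℝ} (h : ∀ v, f v = g v) : f = g :=
  ContinuousLinearMap.ext h

lemma hasFDerivAt_vec3 {f g h : (Fin 3 → ℝ) → ℝ} {f' g' h' : (Fin 3 → ℝ) →L[ℝ] ℝ}
    {x : Fin 3 → ℝ}
    (hf : HasFDerivAt f f' x) (hg : HasFDerivAt g g' x) (hh : HasFDerivAt h h' x) :
    HasFDerivAt (fun x => ![f x, g x, h x]) (ContinuousLinearMap.pi ![f', g', h']) x := by
  rw [hasFDerivAt_pi']
  intro i
  fin_cases i <;> simp [proj_pi] <;> [exact hf; exact hg; exact hh]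

lemma hproj (i : Fin 3) (x : Fin 3 → ℝ) : HasFDerivAt (fun y : Fin 3 → ℝ => y i) (pj i) x :=
  hasFDerivAt_apply i x

lemma hasFDerivAt_poly (a b c d : ℝ) (x : Fin 3 → ℝ) :
    HasFDerivAt (fun y : Fin 3 → ℝ => a + b * y 0 + c * y 2 + d * y 2 ^ 2)
      (b • pj 0 + (c + 2 * d * x 2) • pj 2) x := by
  have h2 : HasFDerivAt (fun y : Fin 3 → ℝ => (y 2) ^ 2) ((2 * x 2) • pj 2) x := by
    have := (hproj 2 x).mul (hproj 2 x)
    have e : (fun y : Fin 3 → ℝ => (y 2) ^ 2) = (fun y => y 2) * (fun y => y 2) := by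
      funext y; simp [pow_two]
    rw [e]; refine this.congr_fderiv ?_
    · apply clm_eq; intro v
      simp only [ContinuousLinearMap.add_apply, ContinuousLinearMap.smul_apply,
        ContinuousLinearMap.proj_apply, smul_eq_mul]
      ring
  have := (((hasFDerivAt_const a x).add ((hproj 0 x).const_mul b)).add
    ((hproj 2 x).const_mul c)).add (h2.const_mul d)
  refine HasFDerivAt.congr_fderiv (by exact this) ?_
  apply clm_eq; intro v
  simp only [ContinuousLinearMap.add_apply, ContinuousLinearMap.smul_apply,
    ContinuousLinearMap.zero_apply, ContinuousLinearMap.proj_apply, smul_eq_mul]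
  ring

lemma hasFDerivAt_poly' (f : (Fin 3 → ℝ) → ℝ) (a b c d : ℝ) (x : Fin 3 → ℝ)
    (hf : ∀ y, f y = a + b * y 0 + c * y 2 + d * y 2 ^ 2) :
    HasFDerivAt f (b • pj 0 + (c + 2 * d * x 2) • pj 2) x := by
  have : f = fun y : Fin 3 → ℝ => a + b * y 0 + c * y 2 + d * y 2 ^ 2 := funext hf
  rw [this]; exact hasFDerivAt_poly a b c d x

/-- Derivative of `F0`. -/
lemma hF0 (c1 c2 c3 c4 c5 c6 : ℝ) (x : Fin 3 → ℝ) :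
    HasFDerivAt (F0 c1 c2 c3 c4 c5 c6)
      (ContinuousLinearMap.pi
        ![c1 • pj 0 + (c2 + 2 * 0 * x 2) • pj 2,
          (0 : ℝ) • pj 0 + (c3 + 2 * 0 * x 2) • pj 2,
          c5 • pj 0 + ((0 : ℝ) + 2 * c6 * x 2) • pj 2]) x := by
  unfold F0
  exact hasFDerivAt_vec3
    (hasFDerivAt_poly' _ 0 c1 c2 0 x (by intro y; ring))
    (hasFDerivAt_poly' _ 0 0 c3 0 x (by intro y; ring))
    (hasFDerivAt_poly' _ c4 c5 0 c6 x (by intro y; ring))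

lemma dF1 (c7 : ℝ) (x : Fin 3 → ℝ) : fderiv ℝ (F1 c7) x = 0 := by
  unfold F1; exact fderiv_const_apply _

/-- The bracket `F₀₁ = [F₀, F₁]`. -/
lemma b1 (c1 c2 c3 c4 c5 c6 c7 : ℝ) :
    lieBracket (F0 c1 c2 c3 c4 c5 c6) (F1 c7)
      = fun _ => ![-(c7 * c1), 0, -(c7 * c5)] := by
  funext x
  unfold lieBracket
  rw [dF1, (hF0 c1 c2 c3 c4 c5 c6 x).fderiv]
  funext i
  fin_cases i <;>
    simp [F1, ContinuousLinearMap.pi_apply, smul_eq_mul] <;> ring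

/-- The bracket `F₀₀₁ = [F₀, F₀₁]`. -/
lemma b2 (c1 c2 c3 c4 c5 c6 c7 : ℝ) :
    lieBracket (F0 c1 c2 c3 c4 c5 c6) (lieBracket (F0 c1 c2 c3 c4 c5 c6) (F1 c7))
      = fun x => ![c7 * (c1 ^ 2 + c2 * c5), c7 * (c3 * c5),
          c7 * (c5 * (c1 + 2 * c6 * x 2))] := by
  funext x
  rw [b1]
  unfold lieBracket
  rw [fderiv_const_apply, (hF0 c1 c2 c3 c4 c5 c6 x).fderiv]
  funext i
  fin_cases i <;>
    simp [ContinuousLinearMap.pi_apply, smul_eq_mul] <;> ring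

/-- Derivative of `F₀₀₁`. -/
lemma hG2 (c1 c2 c3 c5 c6 c7 : ℝ) (x : Fin 3 → ℝ) :
    HasFDerivAt (fun x : Fin 3 → ℝ => ![c7 * (c1 ^ 2 + c2 * c5), c7 * (c3 * c5),
        c7 * (c5 * (c1 + 2 * c6 * x 2))])
      (ContinuousLinearMap.pi
        ![(0 : ℝ) • pj 0 + ((0 : ℝ) + 2 * 0 * x 2) • pj 2,
          (0 : ℝ) • pj 0 + ((0 : ℝ) + 2 * 0 * x 2) • pj 2,
          (0 : ℝ) • pj 0 + (2 * c5 * c6 * c7 + 2 * 0 * x 2) • pj 2]) x :=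
  hasFDerivAt_vec3
    (hasFDerivAt_poly' _ (c7 * (c1 ^ 2 + c2 * c5)) 0 0 0 x (by intro y; ring))
    (hasFDerivAt_poly' _ (c7 * (c3 * c5)) 0 0 0 x (by intro y; ring))
    (hasFDerivAt_poly' _ (c7 * c5 * c1) 0 (2 * c5 * c6 * c7) 0 x (by intro y; ring))

/-- The bracket `F₀₀₀₁ = [F₀, F₀₀₁]`. -/
lemma b4 (c1 c2 c3 c4 c5 c6 c7 : ℝ) :
    lieBracket (F0 c1 c2 c3 c4 c5 c6)
        (lieBracket (F0 c1 c2 c3 c4 c5 c6) (lieBracket (F0 c1 c2 c3 c4 c5 c6) (F1 c7)))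
      = fun x => ![-(c1 * (c7 * (c1 ^ 2 + c2 * c5)) + c2 * c1 * c5 * c7
            + 2 * c2 * c5 * c6 * c7 * x 2),
          -(c3 * c1 * c5 * c7 + 2 * c3 * c5 * c6 * c7 * x 2),
          2 * c5 * c6 * c7 * (c4 + c5 * x 0 + c6 * x 2 ^ 2)
            - (c5 * (c7 * (c1 ^ 2 + c2 * c5))
              + 2 * c6 * x 2 * (c7 * (c5 * (c1 + 2 * c6 * x 2))))] := by
  funext x
  rw [b2]
  unfold lieBracket
  rw [(hG2 c1 c2 c3 c5 c6 c7 x).fderiv, (hF0 c1 c2 c3 c4 c5 c6 x).fderiv]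
  funext i
  fin_cases i <;>
    simp [F0, ContinuousLinearMap.pi_apply, smul_eq_mul] <;> ring

/-- Derivative of `F₀₀₀₁`. -/
lemma hG4 (c1 c2 c3 c4 c5 c6 c7 : ℝ) (x : Fin 3 → ℝ) :
    HasFDerivAt (fun x : Fin 3 → ℝ =>
        ![-(c1 * (c7 * (c1 ^ 2 + c2 * c5)) + c2 * c1 * c5 * c7
            + 2 * c2 * c5 * c6 * c7 * x 2),
          -(c3 * c1 * c5 * c7 + 2 * c3 * c5 * c6 * c7 * x 2),
          2 * c5 * c6 * c7 * (c4 + c5 * x 0 + c6 * x 2 ^ 2)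
            - (c5 * (c7 * (c1 ^ 2 + c2 * c5))
              + 2 * c6 * x 2 * (c7 * (c5 * (c1 + 2 * c6 * x 2))))])
      (ContinuousLinearMap.pi
        ![(0 : ℝ) • pj 0 + (-(2 * c2 * c5 * c6 * c7) + 2 * 0 * x 2) • pj 2,
          (0 : ℝ) • pj 0 + (-(2 * c3 * c5 * c6 * c7) + 2 * 0 * x 2) • pj 2,
          (2 * c5 ^ 2 * c6 * c7) • pj 0
            + (-(2 * c1 * c5 * c6 * c7) + 2 * (-(2 * c5 * c6 ^ 2 * c7)) * x 2) • pj 2]) x :=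
  hasFDerivAt_vec3
    (hasFDerivAt_poly' _ (-(c1 * (c7 * (c1 ^ 2 + c2 * c5)) + c2 * c1 * c5 * c7)) 0
      (-(2 * c2 * c5 * c6 * c7)) 0 x (by intro y; ring))
    (hasFDerivAt_poly' _ (-(c3 * c1 * c5 * c7)) 0 (-(2 * c3 * c5 * c6 * c7)) 0 x
      (by intro y; ring))
    (hasFDerivAt_poly' _ (2 * c4 * c5 * c6 * c7 - c5 * c7 * (c1 ^ 2 + c2 * c5))
      (2 * c5 ^ 2 * c6 * c7) (-(2 * c1 * c5 * c6 * c7)) (-(2 * c5 * c6 ^ 2 * c7)) x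
      (by intro y; ring))

theorem stmt0 (c1 c2 c3 c4 c5 c6 c7 : ℝ)
    (h1 : c1 < 0) (h2 : c2 < 0) (h3 : 0 < c3) (h4 : c4 < 0)
    (h5 : 0 < c5) (h6 : c6 < 0) (h7 : 0 < c7) (x : Fin 3 → ℝ) :
    lieBracket (F0 c1 c2 c3 c4 c5 c6) (F1 c7) x = ![-(c7 * c1), 0, -(c7 * c5)] ∧
    lieBracket (F0 c1 c2 c3 c4 c5 c6) (lieBracket (F0 c1 c2 c3 c4 c5 c6) (F1 c7)) x
      = ![c7 * (c1 ^ 2 + c2 * c5), c7 * (c3 * c5), c7 * (c5 * (c1 + 2 * c6 * x 2))] ∧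
    lieBracket (F1 c7) (lieBracket (F0 c1 c2 c3 c4 c5 c6) (F1 c7)) x = 0 ∧
    lieBracket (F1 c7)
      (lieBracket (F0 c1 c2 c3 c4 c5 c6) (lieBracket (F0 c1 c2 c3 c4 c5 c6) (F1 c7))) x = 0 ∧
    lieBracket (F1 c7)
      (lieBracket (F0 c1 c2 c3 c4 c5 c6)
        (lieBracket (F0 c1 c2 c3 c4 c5 c6) (lieBracket (F0 c1 c2 c3 c4 c5 c6) (F1 c7)))) x
      = ![0, 0, 2 * c5 ^ 2 * c6 * c7 ^ 2] := by
  refine ⟨?_, ?_, ?_, ?_, ?_⟩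
  · rw [b1]
  · rw [b2]
  · rw [b1]
    unfold lieBracket
    rw [dF1, fderiv_const_apply]
    simp
  · rw [b2]
    unfold lieBracket
    rw [dF1, (hG2 c1 c2 c3 c5 c6 c7 x).fderiv]
    funext i
    fin_cases i <;>
      simp [F1, ContinuousLinearMap.pi_apply, smul_eq_mul]
  · rw [b4]
    unfold lieBracket
    rw [dF1, (hG4 c1 c2 c3 c4 c5 c6 c7 x).fderiv]
    funext i
    fin_cases i <;>
      simp [F1, ContinuousLinearMap.pi_apply, smul_eq_mul] <;> ring
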